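/- For real numbers 0 < σ₀ ≤ 1/2, a fixed real t₀, and an integer N ≥ 2, the sum over n from 1 to N of the integral of n^{-s} ds along the horizontal segment from σ₀ + it₀ to 1 − σ₀ + it₀ has absolute value at most (N^{1−σ₀} − N^{σ₀})/(σ₀ · log N). -/

import Mathlib

open Complex Real

lemma sum_rpow_le_aux (σ : ℝ) (hσ0 : 0 < σ) (hσ1 : σ < 1) (N : ℕ) (hN : 2 ≤ N) :
    ∑ n ∈ Finset.Icc 1 N, (n : ℝ) ^ (-σ) ≤ (N : ℝ) ^ (1 - σ) / (1 - σ) := by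
  have hN1 : 1 ≤ N := by omega
  have hanti : AntitoneOn (fun x : ℝ => x ^ (-σ)) (Set.Icc ((1:ℕ):ℝ) ((N:ℕ):ℝ)) := by
    intro x hx y hy hxy
    exact Real.rpow_le_rpow_of_nonpos
      (lt_of_lt_of_le one_pos (by exact_mod_cast hx.1)) hxy (by linarith)
  have hsum : ∑ i ∈ Finset.Ico 1 N, (((i + 1 : ℕ)) : ℝ) ^ (-σ) ≤
      ∫ x in ((1:ℕ):ℝ)..((N:ℕ):ℝ), x ^ (-σ) := hanti.sum_le_integral_Ico hN1
  have hre : ∑ n ∈ Finset.Icc 2 N, (n : ℝ) ^ (-σ) =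
      ∑ i ∈ Finset.Ico 1 N, (((i + 1 : ℕ)) : ℝ) ^ (-σ) := by
    rw [← Finset.Ico_add_one_right_eq_Icc, ← Finset.map_add_right_Ico 1 N 1, Finset.sum_map]
    simp [addRightEmbedding]
  have hint : (∫ x in ((1:ℕ):ℝ)..((N:ℕ):ℝ), x ^ (-σ)) =
      ((N:ℝ) ^ (1 - σ) - 1) / (1 - σ) := by
    rw [integral_rpow (Or.inl (by linarith))]
    norm_num
    rw [show -σ + 1 = 1 - σ by ring]
  have hsplit : ∑ n ∈ Finset.Icc 1 N, (n : ℝ) ^ (-σ) =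
      1 + ∑ n ∈ Finset.Icc 2 N, (n : ℝ) ^ (-σ) := by
    have : Finset.Icc 1 N = insert 1 (Finset.Icc 2 N) := by
      ext x; simp [Finset.mem_Icc, Finset.mem_insert]; omega
    rw [this, Finset.sum_insert (by simp)]
    norm_num
  have hpow : (0:ℝ) < (N:ℝ) ^ (1 - σ) := Real.rpow_pos_of_pos (by positivity) _
  have h1σ : 0 < 1 - σ := by linarith
  rw [hsplit, hre]
  have h1 : (1:ℝ) ≤ 1/(1-σ) := by rw [le_div_iff₀ h1σ]; linarith
  have key : ∑ i ∈ Finset.Ico 1 N, (((i + 1 : ℕ)) : ℝ) ^ (-σ) ≤ ((N:ℝ) ^ (1 - σ) - 1) / (1 - σ) :=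
    le_trans hsum (le_of_eq hint)
  have heq : ((N:ℝ)^(1-σ)-1)/(1-σ) + 1/(1-σ) = (N:ℝ)^(1-σ)/(1-σ) := by
    rw [← add_div]; ring_nf
  linarith

theorem sum_integral_bound (σ₀ t₀ : ℝ) (h1 : 0 < σ₀) (h2 : σ₀ ≤ 1 / 2)
    (N : ℕ) (hN : 2 ≤ N) :
    ‖∑ n ∈ Finset.Icc 1 N,
        ∫ σ in σ₀..(1 - σ₀), (n : ℂ) ^ (-((σ : ℂ) + (t₀ : ℂ) * Complex.I))‖ ≤
      ((N : ℝ) ^ (1 - σ₀) - (N : ℝ) ^ σ₀) / (σ₀ * Real.log N) := by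
  have hNR : (2:ℝ) ≤ (N:ℝ) := by exact_mod_cast hN
  have hN0 : (0:ℝ) < (N:ℝ) := by linarith
  have hσ : σ₀ ≤ 1 - σ₀ := by linarith
  have hlog : 0 < Real.log N := Real.log_pos (by linarith)
  have hcont : ∀ n ∈ Finset.Icc 1 N,
      Continuous fun σ : ℝ => (n:ℂ) ^ (-((σ:ℂ) + (t₀:ℂ) * Complex.I)) := by
    intro n hn
    have hn1 : 1 ≤ n := (Finset.mem_Icc.mp hn).1
    have hn0 : (n:ℂ) ≠ 0 := by
      simp only [Ne, Nat.cast_eq_zero]; omega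
    exact Continuous.const_cpow (by fun_prop) (Or.inl hn0)
  have hint : ∀ n ∈ Finset.Icc 1 N,
      IntervalIntegrable (fun σ:ℝ => (n:ℂ)^(-((σ:ℂ)+(t₀:ℂ)*Complex.I)))
        MeasureTheory.volume σ₀ (1-σ₀) :=
    fun n hn => (hcont n hn).intervalIntegrable _ _
  rw [← intervalIntegral.integral_finset_sum hint]
  have hbound : ∀ σ ∈ Set.Icc σ₀ (1-σ₀),
      ‖∑ n ∈ Finset.Icc 1 N, (n:ℂ)^(-((σ:ℂ)+(t₀:ℂ)*Complex.I))‖ ≤ (N:ℝ)^(1-σ)/σ₀ := by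
    intro σ hσm
    have hσ0 : 0 < σ := lt_of_lt_of_le h1 hσm.1
    have hσ1 : σ < 1 := by have := hσm.2; linarith
    calc ‖∑ n ∈ Finset.Icc 1 N, (n:ℂ)^(-((σ:ℂ)+(t₀:ℂ)*Complex.I))‖
        ≤ ∑ n ∈ Finset.Icc 1 N, ‖(n:ℂ)^(-((σ:ℂ)+(t₀:ℂ)*Complex.I))‖ := norm_sum_le _ _
      _ = ∑ n ∈ Finset.Icc 1 N, (n:ℝ)^(-σ) := by
          refine Finset.sum_congr rfl fun n hn => ?_
          have hn1 : 1 ≤ n := (Finset.mem_Icc.mp hn).1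
          have hn0 : (0:ℝ) < (n:ℝ) := by exact_mod_cast hn1
          rw [show ((n:ℕ):ℂ) = (((n:ℕ):ℝ):ℂ) by push_cast; ring]
          rw [Complex.norm_cpow_eq_rpow_re_of_pos hn0]
          norm_num
      _ ≤ (N:ℝ)^(1-σ)/(1-σ) := sum_rpow_le_aux σ hσ0 hσ1 N hN
      _ ≤ (N:ℝ)^(1-σ)/σ₀ := by
          have h2' := hσm.2
          apply div_le_div_of_nonneg_left (le_of_lt (Real.rpow_pos_of_pos hN0 _)) h1
          linarith
  have hderiv : ∀ σ ∈ Set.uIcc σ₀ (1-σ₀),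
      HasDerivAt (fun σ => -(N:ℝ)^(1-σ)/Real.log N) ((N:ℝ)^(1-σ)) σ := by
    intro σ _
    have ha : HasDerivAt (fun x:ℝ => (N:ℝ)^x) ((N:ℝ)^(1-σ) * Real.log N) (1-σ) :=
      (Real.hasStrictDerivAt_const_rpow hN0 (1-σ)).hasDerivAt
    have hb : HasDerivAt (fun σ:ℝ => 1 - σ) (-1) σ := by
      simpa using (hasDerivAt_id σ).const_sub 1
    have hc := (ha.comp σ hb)
    have hd := (hc.neg).div_const (Real.log N)
    refine HasDerivAt.congr_deriv hd ?_
    field_simp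
  have hcont2 : Continuous fun σ : ℝ => (N:ℝ)^(1-σ) :=
    Continuous.rpow continuous_const (by fun_prop) (fun x => Or.inl (ne_of_gt hN0))
  have hintval : (∫ σ in σ₀..(1-σ₀), (N:ℝ)^(1-σ)) =
      ((N:ℝ)^(1-σ₀) - (N:ℝ)^σ₀)/Real.log N := by
    rw [intervalIntegral.integral_eq_sub_of_hasDerivAt hderiv (hcont2.intervalIntegrable _ _)]
    field_simp
    ring
  calc ‖∫ σ in σ₀..(1-σ₀), ∑ n ∈ Finset.Icc 1 N, (n:ℂ)^(-((σ:ℂ)+(t₀:ℂ)*Complex.I))‖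
      ≤ ∫ σ in σ₀..(1-σ₀), ‖∑ n ∈ Finset.Icc 1 N, (n:ℂ)^(-((σ:ℂ)+(t₀:ℂ)*Complex.I))‖ :=
        intervalIntegral.norm_integral_le_integral_norm hσ
    _ ≤ ∫ σ in σ₀..(1-σ₀), (N:ℝ)^(1-σ)/σ₀ := by
        apply intervalIntegral.integral_mono_on hσ
          ((continuous_finset_sum _ hcont).norm.intervalIntegrable _ _)
          ((hcont2.div_const σ₀).intervalIntegrable _ _) hbound
    _ = ((N:ℝ)^(1-σ₀) - (N:ℝ)^σ₀)/(σ₀ * Real.log N) := by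
        rw [intervalIntegral.integral_div, hintval, div_div, mul_comm]
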